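/- Let d > 0 be a real number and let h : ℝ → ℝ be continuous and integrable. Set u := p_d ∗ h. Then u is differentiable and for every x ∈ ℝ: u(x) + √d·u'(x) = (1/√d)·e^{x/√d} ∫_x^{+∞} e^{−ξ/√d} h(ξ) dξ, and u(x) − √d·u'(x) = (1/√d)·e^{−x/√d} ∫_{−∞}^x e^{ξ/√d} h(ξ) dξ. -/

import Mathlib

/-- The kernel `p_d(x) = (1/(2√d)) exp(-|x|/√d)`. -/
noncomputable def pd (d : ℝ) (x : ℝ) : ℝ :=
  1 / (2 * Real.sqrt d) * Real.exp (-|x| / Real.sqrt d)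

open MeasureTheory Set Filter intervalIntegral

/-- **One-sided exponential average representations of `(1 ± √d ∂ₓ)(1 - d∂ₓ²)⁻¹`.**
For `h` continuous and integrable and `u := p_d ∗ h`,
`u + √d u' = (1/√d) e^{x/√d} ∫_x^∞ e^{-ξ/√d} h(ξ) dξ` and
`u - √d u' = (1/√d) e^{-x/√d} ∫_{-∞}^x e^{ξ/√d} h(ξ) dξ`. -/
theorem one_sided_exponential_averages (d : ℝ) (hd : 0 < d) (h : ℝ → ℝ)
    (hc : Continuous h) (hi : MeasureTheory.Integrable h)
    (u : ℝ → ℝ) (hu : u = fun x => ∫ ξ : ℝ, pd d (x - ξ) * h ξ) :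
    Differentiable ℝ u ∧
    ∀ x : ℝ,
      u x + Real.sqrt d * deriv u x
        = (1 / Real.sqrt d) * Real.exp (x / Real.sqrt d)
          * ∫ ξ in Set.Ioi x, Real.exp (-ξ / Real.sqrt d) * h ξ
      ∧ u x - Real.sqrt d * deriv u x
        = (1 / Real.sqrt d) * Real.exp (-x / Real.sqrt d)
          * ∫ ξ in Set.Iio x, Real.exp (ξ / Real.sqrt d) * h ξ := by
  have hs : 0 < Real.sqrt d := Real.sqrt_pos.mpr hd
  set s := Real.sqrt d with hsdef
  set gp : ℝ → ℝ := fun ξ => Real.exp (-ξ / s) * h ξ with hgp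
  set gm : ℝ → ℝ := fun ξ => Real.exp (ξ / s) * h ξ with hgm
  have hgpc : Continuous gp := (Real.continuous_exp.comp (continuous_neg.div_const s)).mul hc
  have hgmc : Continuous gm := (Real.continuous_exp.comp (continuous_id.div_const s)).mul hc
  -- integrability of gp on right half-lines
  have hgpI : ∀ a : ℝ, IntegrableOn gp (Ioi a) := by
    intro a
    refine Integrable.mono' (hi.abs.restrict.const_mul (Real.exp (-a / s)))
      hgpc.aestronglyMeasurable ?_
    filter_upwards [ae_restrict_mem measurableSet_Ioi] with ξ hξ
    have haξ : a < ξ := hξ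
    have h1 : Real.exp (-ξ / s) ≤ Real.exp (-a / s) := by
      apply Real.exp_le_exp.mpr
      apply (div_le_div_iff_of_pos_right hs).mpr
      linarith
    calc ‖gp ξ‖ = Real.exp (-ξ / s) * |h ξ| := by
          rw [hgp]; simp [Real.norm_eq_abs, abs_mul, abs_of_pos (Real.exp_pos _)]
      _ ≤ Real.exp (-a / s) * |h ξ| := by gcongr
  -- integrability of gm on left half-lines
  have hgmI : ∀ a : ℝ, IntegrableOn gm (Iic a) := by
    intro a
    refine Integrable.mono' (hi.abs.restrict.const_mul (Real.exp (a / s)))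
      hgmc.aestronglyMeasurable ?_
    filter_upwards [ae_restrict_mem measurableSet_Iic] with ξ hξ
    have haξ : ξ ≤ a := hξ
    have h1 : Real.exp (ξ / s) ≤ Real.exp (a / s) := by
      apply Real.exp_le_exp.mpr
      apply (div_le_div_iff_of_pos_right hs).mpr
      linarith
    calc ‖gm ξ‖ = Real.exp (ξ / s) * |h ξ| := by
          rw [hgm]; simp [Real.norm_eq_abs, abs_mul, abs_of_pos (Real.exp_pos _)]
      _ ≤ Real.exp (a / s) * |h ξ| := by gcongr
  set I : ℝ → ℝ := fun x => ∫ ξ in Ioi x, gp ξ with hI_def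
  set J : ℝ → ℝ := fun x => ∫ ξ in Iic x, gm ξ with hJ_def
  -- representation of u
  have hurep : ∀ x : ℝ, u x =
      1 / (2 * s) * (Real.exp (x / s) * I x + Real.exp (-x / s) * J x) := by
    intro x
    have hfint : Integrable (fun ξ => pd d (x - ξ) * h ξ) := by
      refine hi.bdd_mul (c := 1 / (2 * s)) ((continuous_const.mul (Real.continuous_exp.comp
        ((continuous_abs.comp (continuous_const.sub continuous_id)).neg.div_const s))).aestronglyMeasurable) ?_
      refine Eventually.of_forall (fun ξ => ?_)
      rw [Real.norm_eq_abs, pd, abs_mul, abs_of_pos (by positivity : (0:ℝ) < 1 / (2 * s)),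
        abs_of_pos (Real.exp_pos _)]
      have : Real.exp (-|x - ξ| / s) ≤ 1 := by
        rw [← Real.exp_zero]
        apply Real.exp_le_exp.mpr
        apply div_nonpos_of_nonpos_of_nonneg (neg_nonpos.mpr (abs_nonneg _)) hs.le
      calc 1 / (2 * s) * Real.exp (-|x - ξ| / s) ≤ 1 / (2 * s) * 1 := by gcongr
        _ = 1 / (2 * s) := mul_one _
    have hsplit := integral_Iic_add_Ioi (b := x)
      (hfint.integrableOn) (hfint.integrableOn)
    have hleft : (∫ ξ in Iic x, pd d (x - ξ) * h ξ)
        = 1 / (2 * s) * Real.exp (-x / s) * J x := by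
      rw [hJ_def]
      rw [← MeasureTheory.integral_const_mul]
      apply setIntegral_congr_fun measurableSet_Iic
      intro ξ hξ
      have habs : |x - ξ| = x - ξ := abs_of_nonneg (by simp at hξ; linarith)
      simp only [pd, habs, hgm]
      have : -(x - ξ) / s = -x / s + ξ / s := by ring
      rw [this, Real.exp_add]
      ring
    have hright : (∫ ξ in Ioi x, pd d (x - ξ) * h ξ)
        = 1 / (2 * s) * Real.exp (x / s) * I x := by
      rw [hI_def]
      rw [← MeasureTheory.integral_const_mul]
      apply setIntegral_congr_fun measurableSet_Ioi
      intro ξ hξ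
      have habs : |x - ξ| = ξ - x := by
        rw [abs_of_nonpos (by simp at hξ; linarith)]; ring
      simp only [pd, habs, hgp]
      have : -(ξ - x) / s = x / s + -ξ / s := by ring
      rw [this, Real.exp_add]
      ring
    rw [hu]
    simp only [← hsplit, hleft, hright]
    ring
  -- derivative of I
  have hIderiv : ∀ x : ℝ, HasDerivAt I (-(gp x)) x := by
    intro x
    set a := x - 1 with ha
    have hmem : Ioi a ∈ nhds x := Ioi_mem_nhds (by simp [ha])
    have key : ∀ y ∈ Ioi a, I y = I a - ∫ t in a..y, gp t := by
      intro y hy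
      have hle : a ≤ y := le_of_lt hy
      have hsplit := setIntegral_union (f := gp) (μ := volume)
        (Ioc_disjoint_Ioi le_rfl) measurableSet_Ioi
        ((hgpI a).mono_set Ioc_subset_Ioi_self) (hgpI y)
      rw [Ioc_union_Ioi_eq_Ioi hle] at hsplit
      rw [integral_of_le hle]
      have e1 : I a = (∫ t in Ioc a y, gp t) + I y := hsplit
      linarith
    have hFTC : HasDerivAt (fun y => ∫ t in a..y, gp t) (gp x) x :=
      integral_hasDerivAt_right (hgpc.intervalIntegrable a x)
        (hgpc.stronglyMeasurableAtFilter _ _) hgpc.continuousAt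
    have : HasDerivAt (fun y => I a - ∫ t in a..y, gp t) (-(gp x)) x := hFTC.const_sub _
    exact this.congr_of_eventuallyEq (eventuallyEq_of_mem hmem key)
  -- derivative of J
  have hJderiv : ∀ x : ℝ, HasDerivAt J (gm x) x := by
    intro x
    set a := x - 1 with ha
    have key : ∀ y : ℝ, J y = J a + ∫ t in a..y, gm t := by
      intro y
      have e1 : J y - J a = ∫ t in a..y, gm t := integral_Iic_sub_Iic (hgmI a) (hgmI y)
      linarith
    have hFTC : HasDerivAt (fun y => ∫ t in a..y, gm t) (gm x) x :=
      integral_hasDerivAt_right (hgmc.intervalIntegrable a x)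
        (hgmc.stronglyMeasurableAtFilter _ _) hgmc.continuousAt
    have h2 : HasDerivAt (fun y => J a + ∫ t in a..y, gm t) (gm x) x := hFTC.const_add _
    exact h2.congr_of_eventuallyEq (Eventually.of_forall key)
  -- derivative of u
  have hexp_mul : ∀ x : ℝ, Real.exp (x / s) * Real.exp (-x / s) = 1 := by
    intro x; rw [← Real.exp_add]; simp [neg_div]
  have huderiv : ∀ x : ℝ, HasDerivAt u
      (1 / (2 * s) * (1 / s) * (Real.exp (x / s) * I x - Real.exp (-x / s) * J x)) x := by
    intro x
    have e1 : HasDerivAt (fun y : ℝ => Real.exp (y / s)) (Real.exp (x / s) * (1 / s)) x := by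
      have := ((hasDerivAt_id x).div_const s).exp
      simpa using this
    have e2 : HasDerivAt (fun y : ℝ => Real.exp (-y / s)) (Real.exp (-x / s) * (-1 / s)) x := by
      have := (((hasDerivAt_id x).neg).div_const s).exp
      simpa [neg_div] using this
    have m1 : HasDerivAt (fun y => Real.exp (y / s) * I y)
        (Real.exp (x / s) * (1 / s) * I x + Real.exp (x / s) * (-(gp x))) x :=
      e1.mul (hIderiv x)
    have m2 : HasDerivAt (fun y => Real.exp (-y / s) * J y)
        (Real.exp (-x / s) * (-1 / s) * J x + Real.exp (-x / s) * gm x) x :=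
      e2.mul (hJderiv x)
    have hadd := ((m1.add m2).const_mul (1 / (2 * s)))
    have hfun : u = fun y => 1 / (2 * s) * (Real.exp (y / s) * I y + Real.exp (-y / s) * J y) :=
      funext hurep
    rw [hfun]
    refine hadd.congr_deriv ?_
    have hgpx : Real.exp (x / s) * gp x = h x := by
      rw [hgp]; rw [← mul_assoc, hexp_mul x]; ring
    have hgmx : Real.exp (-x / s) * gm x = h x := by
      rw [hgm]
      have : Real.exp (-x / s) * (Real.exp (x / s) * h x)
          = (Real.exp (x / s) * Real.exp (-x / s)) * h x := by ring
      rw [this, hexp_mul x]; ring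
    have : Real.exp (x / s) * (-(gp x)) = -(h x) := by rw [← hgpx]; ring
    rw [this, hgmx]
    ring
  have hdiff : Differentiable ℝ u := fun x => (huderiv x).differentiableAt
  refine ⟨hdiff, fun x => ?_⟩
  have hder : deriv u x
      = 1 / (2 * s) * (1 / s) * (Real.exp (x / s) * I x - Real.exp (-x / s) * J x) :=
    (huderiv x).deriv
  have hIeq : (∫ ξ in Set.Ioi x, Real.exp (-ξ / s) * h ξ) = I x := rfl
  have hJeq : (∫ ξ in Set.Iio x, Real.exp (ξ / s) * h ξ) = J x := by
    rw [hJ_def]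
    exact setIntegral_congr_set Iio_ae_eq_Iic
  rw [hder, hurep x, hIeq, hJeq]
  constructor
  · field_simp
    ring
  · field_simp
    ring
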